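/- Let n ≥ 1 and let S be any subset of {(i,j) : 1 ≤ i < j ≤ n}. Set A(S) := {w ∈ S_n : w(i) < w(j) for all (i,j) ∈ S} and a(S) := Σ_{w∈A(S)} sgn(w). Then, in the field Q(x_1,…,x_n) of rational functions over Q, a(S) · ∏_{1≤i<j≤n} (1 − x_j/x_i)/(1 + x_j/x_i) = Σ_{w∈S_n} sgn(w) · ∏_{(i,j)∈S} (1 + x_{w(j)}/x_{w(i)})^{−1}. -/

import Mathlib

open Finset

def Tn (n : ℕ) : Finset (Fin n × Fin n) := Finset.univ.filter (fun p => p.1 < p.2)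

def aS (n : ℕ) (E : Finset (Fin n × Fin n)) : ℤ :=
  ∑ w ∈ Finset.univ.filter
      (fun w : Equiv.Perm (Fin n) => ∀ p ∈ E, w p.1 < w p.2),
    (Equiv.Perm.sign w : ℤ)

def IsTour {n : ℕ} (E : Finset (Fin n × Fin n)) : Prop :=
  (∀ p ∈ E, p.1 ≠ p.2) ∧ (∀ p ∈ E, p.swap ∉ E) ∧
    (∀ p : Fin n × Fin n, p.1 ≠ p.2 → p ∈ E ∨ p.swap ∈ E)

lemma mem_Tn {n : ℕ} {p : Fin n × Fin n} : p ∈ Tn n ↔ p.1 < p.2 := by simp [Tn]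

lemma prod_pairs {n : ℕ} {M : Type*} [CommMonoid M] (f : Fin n → Fin n → M) :
    ∏ i : Fin n, ∏ j ∈ Finset.Ioi i, f i j = ∏ p ∈ Tn n, f p.1 p.2 := by
  rw [Finset.prod_sigma']
  refine Finset.prod_nbij' (fun s => (s.1, s.2)) (fun p => ⟨p.1, p.2⟩) ?_ ?_ ?_ ?_ ?_ <;>
    simp [Tn, Finset.mem_sigma]

lemma tourProd {n : ℕ} {M : Type*} [CommMonoid M] (E : Finset (Fin n × Fin n)) (hE : IsTour E)
    (g : Fin n × Fin n → M) (hg : ∀ p, g p.swap = g p) :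
    ∏ p ∈ E, g p = ∏ p ∈ Tn n, g p := by
  obtain ⟨h1, h2, h3⟩ := hE
  refine Finset.prod_bij' (fun p _ => if p.1 < p.2 then p else p.swap)
    (fun q _ => if q ∈ E then q else q.swap) ?_ ?_ ?_ ?_ ?_
  · intro p hp
    by_cases h : p.1 < p.2
    · simp [h, mem_Tn]
    · have := h1 p hp
      simp only [h, if_false, mem_Tn, Prod.fst_swap, Prod.snd_swap]
      omega
  · intro q hq
    by_cases h : q ∈ E
    · simpa [h] using h
    · have : q.swap ∈ E := by
        rcases h3 q (by have := mem_Tn.1 hq; omega) with h' | h'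
        · exact absurd h' h
        · exact h'
      simpa [h] using this
  · intro p hp
    by_cases h : p.1 < p.2
    · simp [h, hp]
    · have : p.swap ∉ E := h2 p hp
      simp [h, this]
  · intro q hq
    by_cases h : q ∈ E
    · simp [h, mem_Tn.1 hq]
    · have h2' : ¬ (q.swap.1 < q.swap.2) := by have := mem_Tn.1 hq; simp; omega
      simp only [h, if_false]
      rw [if_neg h2', Prod.swap_swap]
  · intro p hp
    by_cases h : p.1 < p.2
    · simp [h]
    · simp [h, hg]

lemma mem_image_perm {n : ℕ} {E : Finset (Fin n × Fin n)} (w : Equiv.Perm (Fin n))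
    {q : Fin n × Fin n} :
    q ∈ E.image (fun p => (w p.1, w p.2)) ↔ (w⁻¹ q.1, w⁻¹ q.2) ∈ E := by
  simp only [Finset.mem_image]
  constructor
  · rintro ⟨p, hp, rfl⟩
    simpa using hp
  · intro h
    exact ⟨(w⁻¹ q.1, w⁻¹ q.2), h, by simp⟩

lemma IsTour.image {n : ℕ} {E : Finset (Fin n × Fin n)} (hE : IsTour E)
    (w : Equiv.Perm (Fin n)) : IsTour (E.image (fun p => (w p.1, w p.2))) := by
  obtain ⟨h1, h2, h3⟩ := hE
  refine ⟨?_, ?_, ?_⟩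
  · intro q hq
    rw [mem_image_perm w] at hq
    have := h1 _ hq
    simp only [ne_eq] at this ⊢
    intro h; exact this (by rw [h])
  · intro q hq hq'
    rw [mem_image_perm w] at hq hq'
    exact h2 _ hq hq'
  · intro q hq
    have : (w⁻¹ q.1) ≠ (w⁻¹ q.2) := fun h => hq (by
      have := congrArg w h; simpa using this)
    rcases h3 (w⁻¹ q.1, w⁻¹ q.2) this with h | h
    · left; rw [mem_image_perm w]; exact h
    · right; rw [mem_image_perm w]; exact h

section Deg
variable {n : ℕ}

/-- out-degree -/
def degE (E : Finset (Fin n × Fin n)) (i : Fin n) : ℕ :=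
  (E.filter (fun p => p.1 = i)).card

lemma degE_lt {E : Finset (Fin n × Fin n)} (h1 : ∀ p ∈ E, p.1 ≠ p.2) (i : Fin n) :
    degE E i < n := by
  have hn : 0 < n := i.pos
  have hle : (E.filter (fun p => p.1 = i)).card ≤ (Finset.univ.erase i).card := by
    apply Finset.card_le_card_of_injOn (fun p => p.2)
    · intro p hp
      simp only [Finset.mem_coe, Finset.mem_filter] at hp
      have := h1 p hp.1
      simp [Finset.mem_erase]
      rw [← hp.2]; exact fun h => this (by rw [h])
    · intro p hp q hq hpq
      simp only [Finset.mem_coe, Finset.mem_filter] at hp hq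
      exact Prod.ext (hp.2.trans hq.2.symm) hpq
  rw [Finset.card_erase_of_mem (Finset.mem_univ i), Finset.card_univ, Fintype.card_fin] at hle
  unfold degE
  omega

lemma prod_degE {E : Finset (Fin n × Fin n)} {M : Type*} [CommMonoid M] (f : Fin n → M) :
    ∏ p ∈ E, f p.1 = ∏ i : Fin n, f i ^ degE E i := by
  rw [← Finset.prod_fiberwise_of_maps_to (g := Prod.fst) (t := Finset.univ)
    (fun p _ => Finset.mem_univ _) (fun p => f p.1)]
  refine Finset.prod_congr rfl fun i _ => ?_
  rw [Finset.prod_congr rfl (fun p hp => ?_), Finset.prod_const]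
  · rfl
  · simp only [Finset.mem_filter] at hp
    rw [hp.2]

lemma card_source (E : Finset (Fin n × Fin n)) (W : Finset (Fin n)) :
    (E.filter (fun p => p.1 ∈ W)).card = ∑ v ∈ W, degE E v := by
  rw [Finset.card_eq_sum_card_fiberwise (f := Prod.fst) (s := E.filter (fun p => p.1 ∈ W)) (t := W)
    (fun p hp => (Finset.mem_filter.1 hp).2)]
  refine Finset.sum_congr rfl fun v hv => ?_
  unfold degE
  congr 1
  ext p
  simp only [Finset.mem_filter]
  constructor
  · tauto
  · rintro ⟨h1, h2⟩; exact ⟨⟨h1, h2 ▸ hv⟩, h2⟩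

lemma tour_trans {E : Finset (Fin n × Fin n)} (hE : IsTour E)
    (hd : Function.Injective (degE E)) :
    ∀ p ∈ E, degE E p.2 < degE E p.1 := by
  obtain ⟨h1, h2, h3⟩ := hE
  intro p hp
  by_contra hcon
  have hij : p.1 ≠ p.2 := h1 p hp
  have hdij : degE E p.1 ≠ degE E p.2 := fun h => hij (hd h)
  have hlt : degE E p.1 < degE E p.2 := by omega
  set d := degE E with hd_def
  set k := d p.1 with hk
  have hkn : k < n := degE_lt h1 p.1
  set W := Finset.univ.filter (fun v => d v ≤ k) with hW
  -- image of d is range n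
  have himg : Finset.univ.image d = Finset.range n := by
    apply Finset.eq_of_subset_of_card_le
    · intro m hm
      simp only [Finset.mem_image] at hm
      obtain ⟨v, _, rfl⟩ := hm
      exact Finset.mem_range.2 (degE_lt h1 v)
    · rw [Finset.card_range, Finset.card_image_of_injective _ hd, Finset.card_univ,
        Fintype.card_fin]
  have hWimg : W.image d = Finset.range (k + 1) := by
    ext m
    simp only [Finset.mem_image, Finset.mem_range]
    constructor
    · rintro ⟨v, hv, rfl⟩
      simp only [hW, Finset.mem_filter] at hv
      omega
    · intro hm
      have : m ∈ Finset.univ.image d := by rw [himg]; exact Finset.mem_range.2 (by omega)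
      simp only [Finset.mem_image] at this
      obtain ⟨v, _, rfl⟩ := this
      exact ⟨v, by rw [hW, Finset.mem_filter]; exact ⟨Finset.mem_univ _, by omega⟩, rfl⟩
  have hWcard : W.card = k + 1 := by
    rw [← Finset.card_image_of_injective W hd, hWimg, Finset.card_range]
  have hsum : (∑ v ∈ W, d v) * 2 = (k + 1) * k := by
    have h5 : ∑ m ∈ W.image d, m = ∑ v ∈ W, d v :=
      Finset.sum_image (fun a _ b _ h => hd h)
    rw [← h5, hWimg]
    simpa using Finset.sum_range_id_mul_two (k + 1)
  set I := E.filter (fun q => q.1 ∈ W ∧ q.2 ∈ W) with hI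
  have hIcard : I.card * 2 = (k + 1) * k := by
    have hunion : W.offDiag = I ∪ I.image Prod.swap := by
      ext q
      simp only [Finset.mem_offDiag, Finset.mem_union, Finset.mem_image, hI,
        Finset.mem_filter]
      constructor
      · rintro ⟨hq1, hq2, hq3⟩
        rcases h3 q hq3 with h | h
        · exact Or.inl ⟨h, hq1, hq2⟩
        · exact Or.inr ⟨q.swap, ⟨h, hq2, hq1⟩, Prod.swap_swap q⟩
      · rintro (⟨hq, hq1, hq2⟩ | ⟨r, ⟨hr, hr1, hr2⟩, rfl⟩)
        · exact ⟨hq1, hq2, h1 q hq⟩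
        · exact ⟨hr2, hr1, by simpa using (h1 r hr).symm⟩
    have hdisj : Disjoint I (I.image Prod.swap) := by
      rw [Finset.disjoint_left]
      intro q hq hq'
      simp only [Finset.mem_image] at hq'
      obtain ⟨r, hr, rfl⟩ := hq'
      simp only [hI, Finset.mem_filter] at hq hr
      exact h2 r hr.1 hq.1
    have hcard : W.offDiag.card = I.card + I.card := by
      rw [hunion, Finset.card_union_of_disjoint hdisj,
        Finset.card_image_of_injective _ Prod.swap_injective]
    rw [Finset.offDiag_card, hWcard] at hcard
    have : (k+1) * (k+1) - (k+1) = (k+1) * k := by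
      have : (k+1) * (k+1) = (k+1) * k + (k+1) := by ring
      omega
    omega
  have hsub : I ⊆ E.filter (fun q => q.1 ∈ W) := by
    intro q hq
    simp only [hI, Finset.mem_filter] at hq ⊢
    exact ⟨hq.1, hq.2.1⟩
  have hmemp : p ∈ E.filter (fun q => q.1 ∈ W) := by
    rw [Finset.mem_filter, hW, Finset.mem_filter]
    exact ⟨hp, Finset.mem_univ _, hk.ge⟩
  have hnotI : p ∉ I := by
    rw [hI, Finset.mem_filter]
    rintro ⟨-, -, hcon2⟩
    rw [hW, Finset.mem_filter] at hcon2
    exact absurd hcon2.2 (by omega)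
  have hlt2 : I.card < (E.filter (fun q => q.1 ∈ W)).card :=
    Finset.card_lt_card (Finset.ssubset_iff_of_subset hsub |>.2 ⟨p, hmemp, hnotI⟩)
  rw [card_source, ← hd_def] at hlt2
  have hcomb := hIcard.trans hsum.symm
  omega

end Deg

section Pairs
variable {n : ℕ} {M : Type*} [CommMonoid M]

lemma prod_snd_fiber (E : Finset (Fin n × Fin n)) (f : Fin n → M) :
    ∏ p ∈ E, f p.2 = ∏ j : Fin n, f j ^ (E.filter (fun p => p.2 = j)).card := by
  rw [← Finset.prod_fiberwise_of_maps_to (g := Prod.snd) (t := Finset.univ)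
    (fun p _ => Finset.mem_univ _) (fun p => f p.2)]
  refine Finset.prod_congr rfl fun j _ => ?_
  rw [Finset.prod_congr rfl (fun p hp => ?_), Finset.prod_const]
  simp only [Finset.mem_filter] at hp
  rw [hp.2]

lemma Tn_fst_card (i : Fin n) :
    ((Tn n).filter (fun p => p.1 = i)).card = n - 1 - (i : ℕ) := by
  rw [← Fin.card_Ioi i]
  refine Finset.card_bij' (fun p _ => p.2) (fun j _ => (i, j)) ?_ ?_ ?_ ?_
  · intro p hp
    simp only [Finset.mem_filter, mem_Tn] at hp
    refine Finset.mem_Ioi.2 ?_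
    show i < p.2
    rw [← hp.2]; exact hp.1
  · intro j hj
    simp only [Finset.mem_filter, mem_Tn]
    exact ⟨Finset.mem_Ioi.1 hj, trivial⟩
  · intro p hp
    simp only [Finset.mem_filter, mem_Tn] at hp
    exact Prod.ext hp.2.symm rfl
  · intro j hj; rfl

lemma Tn_snd_card (j : Fin n) :
    ((Tn n).filter (fun p => p.2 = j)).card = (j : ℕ) := by
  rw [← Fin.card_Iio j]
  refine Finset.card_bij' (fun p _ => p.1) (fun i _ => (i, j)) ?_ ?_ ?_ ?_
  · intro p hp
    simp only [Finset.mem_filter, mem_Tn] at hp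
    refine Finset.mem_Iio.2 ?_
    show p.1 < j
    rw [← hp.2]; exact hp.1
  · intro i hi
    simp only [Finset.mem_filter, mem_Tn]
    exact ⟨Finset.mem_Iio.1 hi, trivial⟩
  · intro p hp
    simp only [Finset.mem_filter, mem_Tn] at hp
    exact Prod.ext rfl hp.2.symm
  · intro i hi; rfl

lemma prod_pow_pairs (f : Fin n → M) :
    ∏ p ∈ Tn n, (f p.1 * f p.2) = ∏ i : Fin n, f i ^ (n - 1) := by
  rw [Finset.prod_mul_distrib, prod_degE f, prod_snd_fiber (Tn n) f,
    ← Finset.prod_mul_distrib]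
  refine Finset.prod_congr rfl fun i _ => ?_
  rw [← pow_add]
  congr 1
  unfold degE
  rw [Tn_fst_card, Tn_snd_card]
  have := i.is_lt
  omega

end Pairs

section FieldPart
variable {n : ℕ} {K : Type*} [Field K]

lemma detB (x : Fin n → K) (h1 : ∀ i, x i ≠ 0) :
    (Matrix.of fun i j : Fin n => x i ^ (n - 1 - (j : ℕ))).det
      = ∏ p ∈ Tn n, (x p.1 - x p.2) := by
  have hB : (Matrix.of fun i j : Fin n => x i ^ (n - 1 - (j : ℕ)))
      = Matrix.diagonal (fun i => x i ^ (n - 1)) *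
          Matrix.vandermonde (fun i => (x i)⁻¹) := by
    ext i j
    rw [Matrix.diagonal_mul]
    show x i ^ (n - 1 - (j : ℕ)) = x i ^ (n - 1) * ((x i)⁻¹) ^ (j : ℕ)
    rw [inv_pow, ← pow_sub₀ _ (h1 i) (by have := j.is_lt; omega : (j : ℕ) ≤ n - 1)]
  rw [hB, Matrix.det_mul, Matrix.det_diagonal, Matrix.det_vandermonde,
    prod_pairs (M := K) (fun i j => (x j)⁻¹ - (x i)⁻¹)]
  have hfac : ∀ p ∈ Tn n, (x p.2)⁻¹ - (x p.1)⁻¹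
      = ((x p.1)⁻¹ * (x p.2)⁻¹) * (x p.1 - x p.2) := by
    intro p _
    rw [inv_sub_inv (h1 p.2) (h1 p.1), div_eq_mul_inv, mul_inv]
    ring
  rw [Finset.prod_congr rfl hfac, Finset.prod_mul_distrib,
    prod_pow_pairs (fun i => (x i)⁻¹), ← mul_assoc, ← Finset.prod_mul_distrib]
  have : ∀ i ∈ (Finset.univ : Finset (Fin n)),
      x i ^ (n - 1) * (x i)⁻¹ ^ (n - 1) = 1 := by
    intro i _
    rw [← mul_pow, mul_inv_cancel₀ (h1 i), one_pow]
  rw [Finset.prod_congr rfl this, Finset.prod_const_one, one_mul]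

lemma tour_det (x : Fin n → K) (h2 : ∀ i j : Fin n, i ≠ j → x i + x j ≠ 0)
    (E : Finset (Fin n × Fin n)) (hE : IsTour E) :
    (∑ w : Equiv.Perm (Fin n), ((Equiv.Perm.sign w : ℤ) : K) *
        ∏ p ∈ E, (x (w p.1) / (x (w p.1) + x (w p.2))))
      * ∏ p ∈ Tn n, (x p.1 + x p.2)
    = (Matrix.of fun i j : Fin n => x i ^ (degE E j)).det := by
  rw [Matrix.det_apply, Finset.sum_mul]
  refine Finset.sum_congr rfl fun w _ => ?_
  have hterm : ∀ i : Fin n, (Matrix.of fun i j : Fin n => x i ^ degE E j) (w i) i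
      = x (w i) ^ degE E i := fun i => rfl
  rw [Finset.prod_congr rfl (fun i _ => hterm i), Units.smul_def, zsmul_eq_mul]
  rw [mul_assoc]
  congr 1
  -- ∏_{p∈E} x(w p.1)/(...) * P = ∏ i, x (w i) ^ degE E i
  have hden : ∏ p ∈ E, (x (w p.1) + x (w p.2)) = ∏ p ∈ Tn n, (x p.1 + x p.2) := by
    have hinj : Set.InjOn (fun p : Fin n × Fin n => (w p.1, w p.2)) E := by
      intro p _ q _ h
      simp only [Prod.mk.injEq] at h
      exact Prod.ext (w.injective h.1) (w.injective h.2)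
    have := Finset.prod_image (g := fun p : Fin n × Fin n => (w p.1, w p.2))
      (f := fun q : Fin n × Fin n => x q.1 + x q.2) (s := E)
      (fun a ha b hb h => hinj ha hb h)
    rw [← this]
    exact tourProd _ (hE.image w) _ (fun p => by simp [add_comm])
  have hPne : (∏ p ∈ Tn n, (x p.1 + x p.2)) ≠ 0 :=
    Finset.prod_ne_zero_iff.2 (fun p hp => h2 _ _ (ne_of_lt (mem_Tn.1 hp)))
  rw [Finset.prod_div_distrib, hden, div_mul_cancel₀ _ hPne, prod_degE (fun i => x (w i))]

end FieldPart

theorem Equiv.Perm.apply_inv_self {α : Type*} (f : Equiv.Perm α) (x : α) : f (f⁻¹ x) = x :=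
  Equiv.apply_symm_apply f x

theorem Equiv.Perm.inv_apply_self {α : Type*} (f : Equiv.Perm α) (x : α) : f⁻¹ (f x) = x :=
  Equiv.symm_apply_apply f x

section Main
variable {n : ℕ} {K : Type*} [Field K]

lemma tour_case (x : Fin n → K) (h1 : ∀ i, x i ≠ 0)
    (h2 : ∀ i j : Fin n, i ≠ j → x i + x j ≠ 0)
    (E : Finset (Fin n × Fin n)) (hE : IsTour E) :
    ((aS n E : ℤ) : K) * ∏ p ∈ Tn n, ((x p.1 - x p.2) / (x p.1 + x p.2))
      = ∑ w : Equiv.Perm (Fin n), ((Equiv.Perm.sign w : ℤ) : K) *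
          ∏ p ∈ E, (x (w p.1) / (x (w p.1) + x (w p.2))) := by
  have hPne : (∏ p ∈ Tn n, (x p.1 + x p.2)) ≠ 0 :=
    Finset.prod_ne_zero_iff.2 (fun p hp => h2 _ _ (ne_of_lt (mem_Tn.1 hp)))
  apply mul_right_cancel₀ hPne
  rw [tour_det x h2 E hE, mul_assoc, Finset.prod_div_distrib, div_mul_cancel₀ _ hPne]
  by_cases hA : (Finset.univ.filter
      (fun w : Equiv.Perm (Fin n) => ∀ p ∈ E, w p.1 < w p.2)).Nonempty
  · obtain ⟨w₀, hw₀⟩ := hA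
    rw [Finset.mem_filter] at hw₀
    have hw₀' := hw₀.2
    have hchar : ∀ a b : Fin n, a ≠ b → ((a, b) ∈ E ↔ w₀ a < w₀ b) := by
      intro a b hab
      constructor
      · intro h; exact hw₀' (a, b) h
      · intro h
        rcases hE.2.2 (a, b) hab with h' | h'
        · exact h'
        · have := hw₀' _ h'
          simp only [Prod.fst_swap, Prod.snd_swap] at this
          exact absurd this (by omega)
    have huniq : Finset.univ.filter
        (fun w : Equiv.Perm (Fin n) => ∀ p ∈ E, w p.1 < w p.2) = {w₀} := by
      apply Finset.eq_singleton_iff_unique_mem.2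
      refine ⟨Finset.mem_filter.2 ⟨Finset.mem_univ _, hw₀'⟩, ?_⟩
      intro w hw
      rw [Finset.mem_filter] at hw
      have hf : StrictMono (fun a : Fin n => w (w₀⁻¹ a)) := by
        intro a b hab
        have hne : (w₀⁻¹ a) ≠ (w₀⁻¹ b) := fun h => absurd (congrArg w₀ h)
          (by simp only [Equiv.Perm.apply_inv_self]; omega)
        exact hw.2 (w₀⁻¹ a, w₀⁻¹ b) ((hchar _ _ hne).2
          (by simp only [Equiv.Perm.apply_inv_self]; exact hab))
      have hg : StrictMono (fun a : Fin n => w₀ (w⁻¹ a)) := by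
        intro a b hab
        have hne : (w⁻¹ a) ≠ (w⁻¹ b) := fun h => absurd (congrArg w h)
          (by simp only [Equiv.Perm.apply_inv_self]; omega)
        rcases lt_trichotomy (w₀ (w⁻¹ a)) (w₀ (w⁻¹ b)) with h | h | h
        · exact h
        · exact absurd (w₀.injective h) hne
        · have hmem : ((w⁻¹ b), (w⁻¹ a)) ∈ E := (hchar _ _ hne.symm).2 h
          have := hw.2 _ hmem
          simp only [Equiv.Perm.apply_inv_self] at this
          exact absurd this (by omega)
      have hfix : ∀ a : Fin n, w (w₀⁻¹ a) = a := by
        haveI : WellFoundedLT (Fin n) := inferInstance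
        intro a
        have h1' : a ≤ (fun a : Fin n => w (w₀⁻¹ a)) a := hf.le_apply
        have h2' : w (w₀⁻¹ a) ≤ (fun c : Fin n => w₀ (w⁻¹ c)) (w (w₀⁻¹ a)) := hg.le_apply
        simp only [] at h1' h2'
        rw [Equiv.Perm.inv_apply_self, Equiv.Perm.apply_inv_self] at h2'
        exact le_antisymm h2' h1'
      apply Equiv.ext
      intro a
      have := hfix (w₀ a)
      rw [Equiv.Perm.inv_apply_self] at this
      exact this
    have haS : aS n E = (Equiv.Perm.sign w₀ : ℤ) := by
      unfold aS; rw [huniq, Finset.sum_singleton]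
    have hdeg : ∀ j0 : Fin n, degE E j0 = n - 1 - (w₀ j0 : ℕ) := by
      intro j0
      show (E.filter (fun p => p.1 = j0)).card = n - 1 - (w₀ j0 : ℕ)
      rw [← Fin.card_Ioi (w₀ j0)]
      refine Finset.card_bij' (fun p _ => w₀ p.2) (fun b _ => (j0, w₀⁻¹ b)) ?_ ?_ ?_ ?_
      · intro p hp
        rw [Finset.mem_filter] at hp
        refine Finset.mem_Ioi.2 ?_
        show w₀ j0 < w₀ p.2
        rw [← hp.2]
        exact hw₀' p hp.1
      · intro b hb
        have hlt : w₀ j0 < b := Finset.mem_Ioi.1 hb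
        have hne : j0 ≠ w₀⁻¹ b := by
          intro h
          rw [h, Equiv.Perm.apply_inv_self] at hlt
          exact absurd hlt (lt_irrefl _)
        rw [Finset.mem_filter]
        refine ⟨(hchar _ _ hne).2 (by rw [Equiv.Perm.apply_inv_self]; exact hlt), rfl⟩
      · intro p hp
        rw [Finset.mem_filter] at hp
        show (j0, w₀⁻¹ (w₀ p.2)) = p
        rw [Equiv.Perm.inv_apply_self]
        exact Prod.ext hp.2.symm rfl
      · intro b hb
        show w₀ (w₀⁻¹ b) = b
        exact Equiv.Perm.apply_inv_self w₀ b
    have hmat : (Matrix.of fun i j : Fin n => x i ^ degE E j)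
        = (Matrix.of fun i j : Fin n => x i ^ (n - 1 - (j : ℕ))).submatrix id ⇑w₀ := by
      ext i j
      show x i ^ degE E j = x i ^ (n - 1 - (w₀ j : ℕ))
      rw [hdeg j]
    rw [hmat, Matrix.det_permute', detB x h1, haS]
  · have hempty : Finset.univ.filter
        (fun w : Equiv.Perm (Fin n) => ∀ p ∈ E, w p.1 < w p.2) = ∅ :=
      Finset.not_nonempty_iff_eq_empty.1 hA
    have haS : aS n E = 0 := by unfold aS; rw [hempty, Finset.sum_empty]
    rw [haS]
    have hnotinj : ¬ Function.Injective (degE E) := by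
      intro hinj
      have htr := tour_trans hE hinj
      have hdlt : ∀ v : Fin n, degE E v < n := degE_lt hE.1
      have hginj : Function.Injective
          (fun i => (⟨n - 1 - degE E i, by have := hdlt i; omega⟩ : Fin n)) := by
        intro a b hab
        apply hinj
        have := congrArg Fin.val hab
        simp only at this
        have ha := hdlt a; have hb := hdlt b
        omega
      set g' : Equiv.Perm (Fin n) :=
        Equiv.ofBijective _ (Finite.injective_iff_bijective.1 hginj) with hg'
      have hgmem : g' ∈ Finset.univ.filter
          (fun w : Equiv.Perm (Fin n) => ∀ p ∈ E, w p.1 < w p.2) := by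
        rw [Finset.mem_filter]
        refine ⟨Finset.mem_univ _, fun p hp => ?_⟩
        show (⟨n - 1 - degE E p.1, _⟩ : Fin n) < ⟨n - 1 - degE E p.2, _⟩
        rw [Fin.mk_lt_mk]
        have := htr p hp
        have ha := hdlt p.1; have hb := hdlt p.2
        omega
      rw [hempty] at hgmem
      exact absurd hgmem (Finset.notMem_empty _)
    obtain ⟨a, b, hab, hne⟩ := Function.not_injective_iff.1 hnotinj
    rw [Int.cast_zero, zero_mul]
    symm
    apply Matrix.det_zero_of_column_eq hne
    intro k
    show x k ^ degE E a = x k ^ degE E b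
    rw [hab]

end Main

section Induction
variable {n : ℕ} {K : Type*} [Field K]

lemma key_aux (x : Fin n → K) (h1 : ∀ i, x i ≠ 0)
    (h2 : ∀ i j : Fin n, i ≠ j → x i + x j ≠ 0) :
    ∀ (k : ℕ) (E : Finset (Fin n × Fin n)),
    (∀ p ∈ E, p.1 ≠ p.2) → (∀ p ∈ E, p.swap ∉ E) →
    ((Tn n).filter (fun q => q ∉ E ∧ q.swap ∉ E)).card = k →
    ((aS n E : ℤ) : K) * ∏ p ∈ Tn n, ((x p.1 - x p.2) / (x p.1 + x p.2))
      = ∑ w : Equiv.Perm (Fin n), ((Equiv.Perm.sign w : ℤ) : K) *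
          ∏ p ∈ E, (x (w p.1) / (x (w p.1) + x (w p.2))) := by
  intro k
  induction k with
  | zero =>
    intro E hE1 hE2 hcard
    apply tour_case x h1 h2 E
    refine ⟨hE1, hE2, ?_⟩
    intro p hp
    by_contra hcon
    push_neg at hcon
    have hfe := Finset.card_eq_zero.1 hcard
    rcases lt_or_gt_of_ne hp with h | h
    · have : p ∈ (Tn n).filter (fun q => q ∉ E ∧ q.swap ∉ E) :=
        Finset.mem_filter.2 ⟨mem_Tn.2 h, hcon.1, hcon.2⟩
      rw [hfe] at this
      exact absurd this (Finset.notMem_empty _)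
    · have : p.swap ∈ (Tn n).filter (fun q => q ∉ E ∧ q.swap ∉ E) := by
        refine Finset.mem_filter.2 ⟨mem_Tn.2 h, hcon.2, ?_⟩
        rw [Prod.swap_swap]
        exact hcon.1
      rw [hfe] at this
      exact absurd this (Finset.notMem_empty _)
  | succ k ih =>
    intro E hE1 hE2 hcard
    have hne : ((Tn n).filter (fun q => q ∉ E ∧ q.swap ∉ E)).Nonempty :=
      Finset.card_pos.1 (by omega)
    obtain ⟨q, hq⟩ := hne
    rw [Finset.mem_filter] at hq
    obtain ⟨hqT, hqE, hqsE⟩ := hq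
    have hqlt : q.1 < q.2 := mem_Tn.1 hqT
    have hq12 : q.1 ≠ q.2 := ne_of_lt hqlt
    have hqsq : q.swap ≠ q := by
      intro h
      have := congrArg Prod.fst h
      simp only [Prod.fst_swap] at this
      exact hq12 this.symm
    -- hypotheses for E1 = insert q E
    have hE11 : ∀ p ∈ insert q E, p.1 ≠ p.2 := by
      intro p hp
      rcases Finset.mem_insert.1 hp with rfl | hp'
      · exact hq12
      · exact hE1 p hp'
    have hE12 : ∀ p ∈ insert q E, p.swap ∉ insert q E := by
      intro p hp hcon
      rcases Finset.mem_insert.1 hp with rfl | hp' <;>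
        rcases Finset.mem_insert.1 hcon with h' | h'
      · exact hqsq h'
      · exact hqsE h'
      · exact hqsE (by rw [← h', Prod.swap_swap]; exact hp')
      · exact hE2 p hp' h'
    -- hypotheses for E2 = insert q.swap E
    have hE21 : ∀ p ∈ insert q.swap E, p.1 ≠ p.2 := by
      intro p hp
      rcases Finset.mem_insert.1 hp with rfl | hp'
      · simp only [Prod.fst_swap, Prod.snd_swap]
        exact hq12.symm
      · exact hE1 p hp'
    have hE22 : ∀ p ∈ insert q.swap E, p.swap ∉ insert q.swap E := by
      intro p hp hcon
      rcases Finset.mem_insert.1 hp with rfl | hp' <;>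
        rcases Finset.mem_insert.1 hcon with h' | h'
      · rw [Prod.swap_swap] at h'
        exact hqsq h'.symm
      · rw [Prod.swap_swap] at h'
        exact hqE h'
      · have hpq := congrArg Prod.swap h'
        rw [Prod.swap_swap, Prod.swap_swap] at hpq
        exact hqE (hpq ▸ hp')
      · exact hE2 p hp' h'
    -- cards
    have hswap_ne : ∀ r : Fin n × Fin n, r ∈ Tn n → r.swap ≠ q := by
      intro r hr h
      have h1' := congrArg Prod.fst h
      have h2' := congrArg Prod.snd h
      simp only [Prod.fst_swap, Prod.snd_swap] at h1' h2'
      have := mem_Tn.1 hr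
      rw [← h1', ← h2'] at hqlt
      exact absurd (hqlt.trans this) (lt_irrefl _)
    have hr_ne_qs : ∀ r : Fin n × Fin n, r ∈ Tn n → r ≠ q.swap := by
      intro r hr h
      exact hswap_ne r hr (by rw [h, Prod.swap_swap])
    have hc1 : ((Tn n).filter (fun r => r ∉ insert q E ∧ r.swap ∉ insert q E)).card = k := by
      have hset : (Tn n).filter (fun r => r ∉ insert q E ∧ r.swap ∉ insert q E)
          = ((Tn n).filter (fun r => r ∉ E ∧ r.swap ∉ E)).erase q := by
        ext r
        simp only [Finset.mem_filter, Finset.mem_erase, Finset.mem_insert, not_or]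
        constructor
        · rintro ⟨hrT, ⟨hrq, hrE⟩, _, hrsE⟩
          exact ⟨hrq, hrT, hrE, hrsE⟩
        · rintro ⟨hrq, hrT, hrE, hrsE⟩
          exact ⟨hrT, ⟨hrq, hrE⟩, hswap_ne r hrT, hrsE⟩
      rw [hset, Finset.card_erase_of_mem
        (Finset.mem_filter.2 ⟨hqT, hqE, hqsE⟩), hcard]
      omega
    have hc2 : ((Tn n).filter
        (fun r => r ∉ insert q.swap E ∧ r.swap ∉ insert q.swap E)).card = k := by
      have hset : (Tn n).filter (fun r => r ∉ insert q.swap E ∧ r.swap ∉ insert q.swap E)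
          = ((Tn n).filter (fun r => r ∉ E ∧ r.swap ∉ E)).erase q := by
        ext r
        simp only [Finset.mem_filter, Finset.mem_erase, Finset.mem_insert, not_or]
        constructor
        · rintro ⟨hrT, ⟨_, hrE⟩, hrsq, hrsE⟩
          refine ⟨?_, hrT, hrE, hrsE⟩
          intro h
          exact hrsq (by rw [h])
        · rintro ⟨hrq, hrT, hrE, hrsE⟩
          refine ⟨hrT, ⟨hr_ne_qs r hrT, hrE⟩, ?_, hrsE⟩
          intro h
          exact hrq (by
            have := congrArg Prod.swap h
            rw [Prod.swap_swap, Prod.swap_swap] at this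
            exact this)
      rw [hset, Finset.card_erase_of_mem
        (Finset.mem_filter.2 ⟨hqT, hqE, hqsE⟩), hcard]
      omega
    have e1 := ih (insert q E) hE11 hE12 hc1
    have e2 := ih (insert q.swap E) hE21 hE22 hc2
    -- aS split
    have haS : aS n E = aS n (insert q E) + aS n (insert q.swap E) := by
      unfold aS
      have hf1 : Finset.univ.filter
          (fun w : Equiv.Perm (Fin n) => ∀ p ∈ insert q E, w p.1 < w p.2)
          = (Finset.univ.filter
            (fun w : Equiv.Perm (Fin n) => ∀ p ∈ E, w p.1 < w p.2)).filter
              (fun w => w q.1 < w q.2) := by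
        ext w
        simp only [Finset.mem_filter, Finset.mem_univ, true_and, Finset.mem_insert]
        constructor
        · intro h
          exact ⟨fun p hp => h p (Or.inr hp), h q (Or.inl rfl)⟩
        · rintro ⟨h, hq'⟩
          rintro p (rfl | hp)
          · exact hq'
          · exact h p hp
      have hf2 : Finset.univ.filter
          (fun w : Equiv.Perm (Fin n) => ∀ p ∈ insert q.swap E, w p.1 < w p.2)
          = (Finset.univ.filter
            (fun w : Equiv.Perm (Fin n) => ∀ p ∈ E, w p.1 < w p.2)).filter
              (fun w => ¬ (w q.1 < w q.2)) := by
        ext w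
        simp only [Finset.mem_filter, Finset.mem_univ, true_and, Finset.mem_insert]
        constructor
        · intro h
          refine ⟨fun p hp => h p (Or.inr hp), ?_⟩
          have := h q.swap (Or.inl rfl)
          simp only [Prod.fst_swap, Prod.snd_swap] at this
          omega
        · rintro ⟨h, hq'⟩
          rintro p (rfl | hp)
          · simp only [Prod.fst_swap, Prod.snd_swap]
            have hne : w q.1 ≠ w q.2 := fun hc => hq12 (w.injective hc)
            omega
          · exact h p hp
      rw [hf1, hf2, eq_comm]
      exact Finset.sum_filter_add_sum_filter_not _ _ _
    -- F split
    have hF : ∀ w : Equiv.Perm (Fin n),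
        (∏ p ∈ insert q E, (x (w p.1) / (x (w p.1) + x (w p.2))))
        + (∏ p ∈ insert q.swap E, (x (w p.1) / (x (w p.1) + x (w p.2))))
        = ∏ p ∈ E, (x (w p.1) / (x (w p.1) + x (w p.2))) := by
      intro w
      rw [Finset.prod_insert hqE, Finset.prod_insert hqsE, ← add_mul]
      have hne : w q.1 ≠ w q.2 := fun hc => hq12 (w.injective hc)
      have hadd : x (w q.1) + x (w q.2) ≠ 0 := h2 _ _ hne
      have : x (w q.1) / (x (w q.1) + x (w q.2))
          + x (w q.swap.1) / (x (w q.swap.1) + x (w q.swap.2)) = 1 := by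
        simp only [Prod.fst_swap, Prod.snd_swap]
        rw [div_add_div _ _ hadd (by rw [add_comm] at hadd; exact hadd)]
        rw [div_eq_one_iff_eq (by
          intro hc
          apply hadd
          have : (x (w q.1) + x (w q.2)) * (x (w q.2) + x (w q.1)) = 0 := hc
          rcases mul_eq_zero.1 this with h | h
          · exact h
          · rw [add_comm] at h; exact h)]
        ring
      rw [this, one_mul]
    rw [haS]
    push_cast
    rw [add_mul, e1, e2, ← Finset.sum_add_distrib]
    refine Finset.sum_congr rfl fun w _ => ?_
    rw [← mul_add, hF w]

end Induction

/-- The denominator identity for the queer Lie superalgebra `Q(n)`: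
for any set `S` of pairs `(i,j)` with `i < j`, with
`A(S) = {w ∈ S_n : w(i) < w(j) for all (i,j) ∈ S}` and
`a(S) = Σ_{w ∈ A(S)} sgn(w)`, one has
`a(S)·R = Σ_{w∈S_n} sgn(w)·∏_{(i,j)∈S}(1 + x_{w(j)}/x_{w(i)})⁻¹`
in `ℚ(x₁,…,x_n)`. -/
theorem Qn_denominator_identity (n : ℕ) (hn : 1 ≤ n)
    (K : Type*) [Field K] [Algebra (MvPolynomial (Fin n) ℚ) K]
    [IsFractionRing (MvPolynomial (Fin n) ℚ) K]
    (x : Fin n → K)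
    (hx : ∀ i, x i = algebraMap (MvPolynomial (Fin n) ℚ) K (MvPolynomial.X i))
    (S : Finset (Fin n × Fin n)) (hS : ∀ p ∈ S, p.1 < p.2) :
    ((∑ w ∈ Finset.univ.filter
        (fun w : Equiv.Perm (Fin n) => ∀ p ∈ S, w p.1 < w p.2),
        (Equiv.Perm.sign w : ℤ) : ℤ) : K) *
      ∏ i : Fin n, ∏ j ∈ Finset.Ioi i, ((1 - x j / x i) / (1 + x j / x i)) =
    ∑ w : Equiv.Perm (Fin n),
      ((Equiv.Perm.sign w : ℤ) : K) *
        ∏ p ∈ S, (1 + x (w p.2) / x (w p.1))⁻¹ := by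
  have hinj := IsFractionRing.injective (MvPolynomial (Fin n) ℚ) K
  have h1 : ∀ i, x i ≠ 0 := by
    intro i h
    rw [hx i] at h
    exact MvPolynomial.X_ne_zero i (hinj (h.trans (map_zero _).symm))
  have h2 : ∀ i j : Fin n, i ≠ j → x i + x j ≠ 0 := by
    intro i j hij h
    rw [hx i, hx j, ← map_add] at h
    have hXX : (MvPolynomial.X i + MvPolynomial.X j : MvPolynomial (Fin n) ℚ) = 0 :=
      hinj (h.trans (map_zero _).symm)
    have := congrArg (MvPolynomial.eval (fun _ => (1 : ℚ))) hXX
    simp at this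
  have hS1 : ∀ p ∈ S, p.1 ≠ p.2 := fun p hp => ne_of_lt (hS p hp)
  have hS2 : ∀ p ∈ S, p.swap ∉ S := by
    intro p hp hcon
    have h1' := hS p hp
    have h2' := hS p.swap hcon
    simp only [Prod.fst_swap, Prod.snd_swap] at h2'
    exact absurd (h1'.trans h2') (lt_irrefl _)
  have key := key_aux x h1 h2
    (((Tn n).filter (fun q => q ∉ S ∧ q.swap ∉ S)).card) S hS1 hS2 rfl
  unfold aS at key
  have hR : (∏ i : Fin n, ∏ j ∈ Finset.Ioi i, ((1 - x j / x i) / (1 + x j / x i)))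
      = ∏ p ∈ Tn n, ((x p.1 - x p.2) / (x p.1 + x p.2)) := by
    rw [← prod_pairs (fun i j => (x i - x j) / (x i + x j))]
    refine Finset.prod_congr rfl fun i _ => Finset.prod_congr rfl fun j hj => ?_
    have hij : i ≠ j := ne_of_lt (Finset.mem_Ioi.1 hj)
    have e1 : 1 - x j / x i = (x i - x j) / x i := by
      rw [eq_div_iff (h1 i), sub_mul, div_mul_cancel₀ _ (h1 i), one_mul]
    have e2 : 1 + x j / x i = (x i + x j) / x i := by
      field_simp [h1 i]
    rw [e1, e2, div_div_div_comm, div_self (h1 i), div_one]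
  rw [hR, key]
  refine Finset.sum_congr rfl fun w _ => ?_
  congr 1
  refine Finset.prod_congr rfl fun p hp => ?_
  rw [← div_self (h1 (w p.1)), ← add_div, inv_div]
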